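/- Let a_1,...,a_n be nonzero integers and define S_l = -((Σ_i a_i) - a_l)/a_l for 1 ≤ l ≤ n. Suppose there exists an m×m upper triangular matrix S = (S_{l_{i,j}}) whose entries on and above the diagonal are each equal to some positive S_l, and which has the linkage property: S_{l_{1,i}}·S_{l_{i+1,j}} = S_{l_{1,j}} for all 1 ≤ i < j ≤ m. Then the equation a_1x_1 + ... + a_nx_n = 0 is m-regular. -/

import Mathlib

lemma rat_mul_den_eq_num (q : ℚ) : q * (q.den : ℚ) = (q.num : ℚ) := by
  have h : ((q.den : ℚ)) ≠ 0 := by exact_mod_cast q.den_nz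
  rw [eq_comm, ← div_eq_iff h]
  exact Rat.num_div_den q

/-- Theorem 3: an upper triangular matrix of positive forbidden ratios with the
linkage property implies m-regularity. -/
theorem stmt_8 (n m : ℕ) (hm : 0 < m) (a : Fin n → ℤ) (ha : ∀ i, a i ≠ 0)
    (S : Fin n → ℚ) (hSdef : ∀ l, S l = -(((∑ i, a i : ℤ) : ℚ) - (a l : ℚ)) / (a l : ℚ))
    (L : Fin m → Fin m → Fin n)
    (hpos : ∀ i j : Fin m, i ≤ j → 0 < S (L i j))
    (hlink : ∀ i j : Fin m, ∀ (hij : i < j),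
      S (L ⟨0, hm⟩ i) * S (L ⟨i.1 + 1, Nat.lt_of_le_of_lt hij j.2⟩ j) = S (L ⟨0, hm⟩ j)) :
    ∀ c : ℕ → Fin m, ∃ x : Fin n → ℕ, (∀ i, 0 < x i) ∧
      (∀ i j, c (x i) = c (x j)) ∧ ∑ i, a i * (x i : ℤ) = 0 := by
  intro c
  -- key lemma: a forbidden-ratio pair with the same color gives a solution
  have key : ∀ (l : Fin n) (y z : ℕ), 0 < y → 0 < z → (z : ℚ) = S l * y → c y = c z →
      ∃ x : Fin n → ℕ, (∀ i, 0 < x i) ∧ (∀ i j, c (x i) = c (x j)) ∧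
        ∑ i, a i * (x i : ℤ) = 0 := by
    intro l y z hy hz hzy hc
    refine ⟨fun i => if i = l then z else y, ?_, ?_, ?_⟩
    · intro i; by_cases h : i = l <;> simp [h, hy, hz]
    · intro i j; by_cases hi : i = l <;> by_cases hj : j = l <;> simp [hi, hj, hc]
    · have hal : ((a l : ℤ) : ℚ) ≠ 0 := Int.cast_ne_zero.mpr (ha l)
      have h1 : (a l : ℚ) * z = -(((∑ i, a i : ℤ) : ℚ) - (a l : ℚ)) * y := by
        rw [hzy, hSdef l]
        field_simp
      have h2 : (a l) * (z : ℤ) = -((∑ i, a i) - a l) * (y : ℤ) := by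
        exact_mod_cast h1
      have hsplit : ∀ i : Fin n, a i * (((if i = l then z else y : ℕ) : ℤ))
          = a i * (y : ℤ) + (if i = l then a i * ((z : ℤ) - (y : ℤ)) else 0) := by
        intro i; split <;> push_cast <;> ring
      rw [Finset.sum_congr rfl fun i _ => hsplit i, Finset.sum_add_distrib,
        Finset.sum_ite_eq' Finset.univ l, ← Finset.sum_mul]
      simp only [Finset.mem_univ, if_true]
      linear_combination h2
  -- the chain of ratios
  set q : Fin (m + 1) → ℚ := Fin.cons 1 (fun j => S (L ⟨0, hm⟩ j)) with hq
  have hqpos : ∀ j, 0 < q j := by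
    intro j
    induction j using Fin.cases with
    | zero => simp [hq]
    | succ j => simpa [hq] using hpos ⟨0, hm⟩ j (by simp [Fin.le_def])
  have hratio : ∀ i j : Fin (m + 1), i < j → ∃ l : Fin n, 0 < S l ∧ q j = S l * q i := by
    intro i j hij
    induction j using Fin.cases with
    | zero => exact absurd hij (Fin.not_lt_zero i)
    | succ j =>
      induction i using Fin.cases with
      | zero =>
        exact ⟨L ⟨0, hm⟩ j, hpos ⟨0, hm⟩ j (by simp [Fin.le_def]), by simp [hq]⟩
      | succ i =>
        have hij' : i < j := by
          simpa [Fin.succ_lt_succ_iff] using hij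
        refine ⟨L ⟨i.1 + 1, Nat.lt_of_le_of_lt hij' j.2⟩ j, ?_, ?_⟩
        · exact hpos _ j (by simpa [Fin.le_def] using hij')
        · have := hlink i j hij'
          simp only [hq, Fin.cons_succ]
          rw [← this]; ring
  -- a common multiplier clearing denominators
  set N : ℕ := ∏ j : Fin (m + 1), (q j).den with hN
  have hNpos : 0 < N := Finset.prod_pos fun j _ => (q j).pos
  have hY : ∀ j, ∃ Y : ℕ, 0 < Y ∧ (Y : ℚ) = q j * N := by
    intro j
    obtain ⟨t, ht⟩ := Finset.dvd_prod_of_mem (fun j => (q j).den) (Finset.mem_univ j)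
    have hqj := hqpos j
    have hnum : 0 < (q j).num := Rat.num_pos.mpr hqj
    refine ⟨(q j).num.toNat * t, ?_, ?_⟩
    · have htpos : 0 < t := by
        by_contra h
        push_neg at h
        interval_cases t
        · simp [Finset.prod_eq_zero_iff] at ht
      exact Nat.mul_pos (by omega) htpos
    · have hNe : (N : ℚ) = ((q j).den : ℚ) * (t : ℚ) := by
        rw [hN, ht]; push_cast; ring
      rw [hNe]
      push_cast [Int.toNat_of_nonneg hnum.le]
      rw [← mul_assoc, rat_mul_den_eq_num]
      have hcast : (((q j).num.toNat : ℕ) : ℚ) = ((q j).num : ℚ) := by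
        exact_mod_cast Int.toNat_of_nonneg hnum.le
      rw [hcast]
  choose Y hYpos hYval using hY
  -- pigeonhole
  obtain ⟨i, j, hne, hcij⟩ :=
    Fintype.exists_ne_map_eq_of_card_lt (fun j : Fin (m + 1) => c (Y j)) (by simp)
  rcases lt_or_gt_of_ne hne with h | h
  · obtain ⟨l, hlpos, hql⟩ := hratio i j h
    refine key l (Y i) (Y j) (hYpos i) (hYpos j) ?_ hcij
    rw [hYval, hYval, hql]; ring
  · obtain ⟨l, hlpos, hql⟩ := hratio j i h
    refine key l (Y j) (Y i) (hYpos j) (hYpos i) ?_ hcij.symm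
    rw [hYval, hYval, hql]; ring
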